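/- arXiv:2501.05827 — 2 statements merged into one kernel-verified Lean document; each statement's English description precedes it below -/
import Mathlib

section
/- For every a ≤ 2^n and every j ≤ n−1, m_j(I_a) ≤ m_{n−1}(I_a) = ⌊a/2⌋. -/
/-- The hypercube graph on `{0,1}^n`: two strings adjacent iff they differ in one coordinate. -/
def hypercube (n : ℕ) : SimpleGraph (Fin n → Bool) where
  Adj x y := (Finset.univ.filter (fun i => x i ≠ y i)).card = 1
  symm := by constructor; intro x y h; simpa [ne_comm] using h
  loopless := by constructor; intro x h; simp at h

/-- The integer represented by a string, position 0 most significant. -/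
def bval {n : ℕ} (x : Fin n → Bool) : ℕ :=
  ∑ i : Fin n, if x i then 2 ^ (n - 1 - i.val) else 0

/-- The initial segment of length `a` in the binary order on `{0,1}^n`. -/
def initSeg (n a : ℕ) : Finset (Fin n → Bool) :=
  Finset.univ.filter (fun x => bval x < a)

/-- `m_j(S)`: number of elements of `S` with a `1` in coordinate `j`. -/
def mCount {n : ℕ} (S : Finset (Fin n → Bool)) (j : Fin n) : ℕ :=
  (S.filter (fun x => x j = true)).card

/-- The hyperface `F_{j,k}` of strings whose `j`-th coordinate equals `k`. -/
def face (n : ℕ) (j : Fin n) (k : Bool) : Finset (Fin n → Bool) :=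
  Finset.univ.filter (fun x => x j = k)



section Aux

/-- count of `m < a` with bit `b` set -/
def gcnt (a b : ℕ) : ℕ := ((Finset.range a).filter (fun m => m.testBit b)).card

lemma gcnt_succ (a b : ℕ) : gcnt (a+1) b = gcnt a b + (Nat.testBit a b).toNat := by
  unfold gcnt
  rw [Finset.range_add_one, Finset.filter_insert]
  cases h : Nat.testBit a b <;>
    simp [Finset.card_insert_of_notMem, Finset.notMem_range_self, h]

lemma testBit_small {a b : ℕ} (h : a < 2^(b+1)) : a.testBit b = decide (2^b ≤ a) := by
  have hp : 0 < 2^b := pow_pos (by norm_num) _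
  have h1 : a / 2^b < 2 := Nat.div_lt_of_lt_mul (by rw [pow_succ] at h; omega)
  have h2 : 1 ≤ a / 2^b ↔ 2^b ≤ a := by rw [Nat.le_div_iff_mul_le hp, one_mul]
  rw [Nat.testBit_eq_decide_div_mod_eq]
  rcases Nat.lt_or_ge a (2^b) with hc | hc
  · simp [Nat.div_eq_of_lt hc, Nat.not_le.mpr hc]
  · have : a / 2^b = 1 := by omega
    simp [this, hc]

lemma gcnt_small {a b : ℕ} (h : a ≤ 2^(b+1)) : gcnt a b = a - 2^b := by
  induction a with
  | zero => simp [gcnt]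
  | succ a ih =>
    have ha : a < 2^(b+1) := by omega
    rw [gcnt_succ, ih (le_of_lt ha), testBit_small ha]
    have hp : 0 < 2^b := pow_pos (by norm_num) _
    rcases Nat.lt_or_ge a (2^b) with hc | hc
    · simp [Nat.not_le.mpr hc]; omega
    · simp [hc]; omega

lemma testBit_add_pow {m b : ℕ} : Nat.testBit (2^(b+1) + m) b = Nat.testBit m b := by
  rw [Nat.testBit_eq_decide_div_mod_eq, Nat.testBit_eq_decide_div_mod_eq]
  have hp : 0 < 2^b := pow_pos (by norm_num) _
  have : (2^(b+1) + m) / 2^b = 2 + m / 2^b := by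
    rw [pow_succ, mul_comm (2^b) 2, ← Nat.mul_add_div hp]
    ring_nf
  rw [this, Nat.add_mod_left]

lemma gcnt_shift (a b : ℕ) : gcnt (2^(b+1) + a) b = 2^b + gcnt a b := by
  have hc : ∀ N, gcnt N b = ∑ m ∈ Finset.range N, (Nat.testBit m b).toNat := by
    intro N
    rw [gcnt, Finset.card_filter]
    apply Finset.sum_congr rfl
    intro m _
    cases h : Nat.testBit m b <;> simp [h]
  rw [hc, hc, Finset.sum_range_add]
  congr 1
  · rw [← hc, gcnt_small (le_refl _), pow_succ]; omega
  · apply Finset.sum_congr rfl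
    intro m _
    rw [testBit_add_pow]

lemma gcnt_le (a b : ℕ) : gcnt a b ≤ a / 2 := by
  induction a using Nat.strong_induction_on with
  | _ a ih =>
    have hp : 0 < 2^b := pow_pos (by norm_num) _
    rcases Nat.lt_or_ge a (2^(b+1)) with hc | hc
    · rw [gcnt_small (le_of_lt hc)]
      rw [pow_succ] at hc; omega
    · obtain ⟨a', rfl⟩ : ∃ a', a = 2^(b+1) + a' := ⟨a - 2^(b+1), by omega⟩
      rw [gcnt_shift]
      have hq : 0 < 2^(b+1) := pow_pos (by norm_num) _
      have hih := ih a' (by omega)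
      rw [pow_succ]
      omega

lemma gcnt_zero_eq (a : ℕ) : gcnt a 0 = a / 2 := by
  induction a with
  | zero => simp [gcnt]
  | succ a ih =>
    rw [gcnt_succ, ih, Nat.testBit_eq_decide_div_mod_eq]
    simp only [pow_zero, Nat.div_one]
    rcases Nat.mod_two_eq_zero_or_one a with h | h <;> simp [h] <;> omega

end Aux


def vfun (y : ℕ → Bool) (n : ℕ) : ℕ := ∑ k ∈ Finset.range n, (y k).toNat * 2^k

lemma vfun_lt (y : ℕ → Bool) (n : ℕ) : vfun y n < 2^n := by
  induction n with
  | zero => simp [vfun]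
  | succ n ih =>
    rw [vfun, Finset.sum_range_succ, ← vfun]
    have : (y n).toNat ≤ 1 := Bool.toNat_le _
    rw [pow_succ]
    nlinarith

lemma vfun_testBit (y : ℕ → Bool) (n k : ℕ) :
    (vfun y n).testBit k = (decide (k < n) && y k) := by
  induction n with
  | zero => simp [vfun]
  | succ n ih =>
    have hv : vfun y (n+1) = vfun y n + (y n).toNat * 2^n := by
      rw [vfun, Finset.sum_range_succ, ← vfun]
    have hlt := vfun_lt y n
    cases hyn : y n with
    | false =>
      rw [hv, hyn]
      simp only [Bool.toNat_false, Nat.zero_mul, Nat.add_zero, ih]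
      rcases Nat.lt_trichotomy k n with h | h | h
      · simp [h, Nat.lt_succ_of_lt h]
      · subst h; simp [hyn]
      · have h1 : ¬ k < n := by omega
        have h2 : ¬ k < n + 1 := by omega
        simp [h1, h2]
    | true =>
      rw [hv, hyn]
      simp only [Bool.toNat_true, Nat.one_mul]
      rcases Nat.lt_trichotomy k n with h | h | h
      · -- k < n : bit unchanged
        have hpow : (2:ℕ)^n = 2^(k+1) * 2^(n-k-1) := by
          rw [← pow_add]; congr 1; omega
        have heq : vfun y n + 2^n = 2^(k+1) * 2^(n-k-1) + vfun y n := by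
          rw [← hpow]; omega
        rw [heq, Nat.testBit_eq_decide_div_mod_eq]
        rw [Nat.testBit_eq_decide_div_mod_eq] at ih
        have hp : 0 < 2^k := pow_pos (by norm_num) _
        have hmul : (2:ℕ)^(k+1) * 2^(n-k-1) = 2^k * (2 * 2^(n-k-1)) := by ring
        rw [hmul, Nat.mul_add_div hp, Nat.mul_add_mod, ih]
        simp [h, Nat.lt_succ_of_lt h]
      · subst h
        have : (vfun y k + 2^k).testBit k = decide (2^k ≤ vfun y k + 2^k) := by
          apply testBit_small
          rw [pow_succ]; omega
        rw [this]
        simp [hyn]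
      · have : vfun y n + 2^n < 2^k := by
          calc vfun y n + 2^n < 2^n + 2^n := by omega
          _ = 2^(n+1) := by rw [pow_succ]; ring
          _ ≤ 2^k := Nat.pow_le_pow_right (by norm_num) h
        rw [Nat.testBit_eq_false_of_lt this]
        simp [Nat.not_lt.mpr (Nat.succ_le_of_lt h)]

lemma bval_eq_vfun {n : ℕ} (x : Fin n → Bool) :
    bval x = vfun (fun k => if h : k < n then x ((⟨k, h⟩ : Fin n).rev) else false) n := by
  rw [vfun, ← Fin.sum_univ_eq_sum_range]
  rw [bval, ← Equiv.sum_comp (Fin.revPerm) (fun i => if x i then 2 ^ (n - 1 - i.val) else 0)]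
  apply Finset.sum_congr rfl
  intro i _
  simp only [Fin.revPerm_apply, Fin.is_lt, dif_pos]
  have h1 : (⟨i.val, i.isLt⟩ : Fin n) = i := rfl
  have h2 : n - 1 - (i.rev).val = i.val := by
    rw [Fin.val_rev]; omega
  rw [h2, h1]
  cases x i.rev <;> simp

lemma bval_testBit {n : ℕ} (x : Fin n → Bool) (j : Fin n) :
    (bval x).testBit (n - 1 - j.val) = x j := by
  rw [bval_eq_vfun, vfun_testBit]
  have hj : j.val < n := j.is_lt
  have h : n - 1 - j.val < n := by omega
  have hrev : (⟨n - 1 - j.val, h⟩ : Fin n).rev = j := by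
    apply Fin.ext
    simp only [Fin.val_rev]
    omega
  simp [h, hrev]

lemma bval_lt {n : ℕ} (x : Fin n → Bool) : bval x < 2^n := by
  rw [bval_eq_vfun]; exact vfun_lt _ _

lemma bval_injective {n : ℕ} : Function.Injective (bval (n := n)) := by
  intro x y h
  funext j
  rw [← bval_testBit x j, ← bval_testBit y j, h]

lemma bval_surj {n m : ℕ} (hm : m < 2^n) : ∃ x : Fin n → Bool, bval x = m := by
  have himg : Finset.image bval (Finset.univ : Finset (Fin n → Bool)) = Finset.range (2^n) := by
    apply Finset.eq_of_subset_of_card_le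
    · intro m hm
      simp only [Finset.mem_image] at hm
      obtain ⟨x, _, rfl⟩ := hm
      exact Finset.mem_range.mpr (bval_lt x)
    · rw [Finset.card_range, Finset.card_image_of_injective _ bval_injective]
      simp [Finset.card_univ]
  have : m ∈ Finset.image bval (Finset.univ : Finset (Fin n → Bool)) := by
    rw [himg]; exact Finset.mem_range.mpr hm
  simp only [Finset.mem_image] at this
  obtain ⟨x, _, hx⟩ := this
  exact ⟨x, hx⟩


lemma mCount_initSeg {n a : ℕ} (ha : a ≤ 2^n) (j : Fin n) :
    mCount (initSeg n a) j = gcnt a (n - 1 - j.val) := by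
  rw [mCount, initSeg, Finset.filter_filter, gcnt]
  apply Finset.card_bij (fun x _ => bval x)
  · intro x hx
    simp only [Finset.mem_filter, Finset.mem_univ, true_and] at hx
    simp only [Finset.mem_filter, Finset.mem_range]
    exact ⟨hx.1, by rw [bval_testBit]; exact hx.2⟩
  · intro x _ y _ h
    exact bval_injective h
  · intro m hm
    simp only [Finset.mem_filter, Finset.mem_range] at hm
    obtain ⟨x, rfl⟩ := bval_surj (lt_of_lt_of_le hm.1 ha)
    refine ⟨x, ?_, rfl⟩
    simp only [Finset.mem_filter, Finset.mem_univ, true_and]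
    exact ⟨hm.1, by rw [← bval_testBit x j]; exact hm.2⟩


theorem stmt_8 (n a : ℕ) (hn : 0 < n) (ha : a ≤ 2 ^ n) :
    (∀ j : Fin n, mCount (initSeg n a) j ≤ mCount (initSeg n a) ⟨n - 1, by omega⟩) ∧
    mCount (initSeg n a) ⟨n - 1, by omega⟩ = a / 2 := by
  have hlast : mCount (initSeg n a) ⟨n - 1, by omega⟩ = a / 2 := by
    rw [mCount_initSeg ha]
    simp only
    rw [show n - 1 - (n - 1) = 0 by omega, gcnt_zero_eq]
  refine ⟨fun j => ?_, hlast⟩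
  rw [hlast, mCount_initSeg ha]
  exact gcnt_le a _
end

section
/- For a ≤ 2^n and initial segments in Q_{n+1} (m-vector indexed 0..n): m_j(I_{2a}) = 2·m_{j+1}(I_a) for j ≤ n−1, and m_n(I_{2a}) = a, where m_{j+1}(I_a) refers to the m-vector of I_a viewed in Q_{n+1}. -/
/-! ### Auxiliary shift machinery -/

def shiftR {n : ℕ} (x : Fin (n+1) → Bool) : Fin (n+1) → Bool :=
  Fin.cons false (fun i : Fin n => x i.castSucc)

def shiftL {n : ℕ} (y : Fin (n+1) → Bool) (b : Bool) : Fin (n+1) → Bool :=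
  Fin.snoc (fun i : Fin n => y i.succ) b

lemma bval_shiftR_eq {n : ℕ} (x : Fin (n+1) → Bool) :
    bval (shiftR x) = ∑ i : Fin n, if x i.castSucc then 2 ^ (n - 1 - i.val) else 0 := by
  unfold bval shiftR
  have h := Fin.sum_univ_succ (f := fun i : Fin (n+1) =>
    if (Fin.cons false (fun i : Fin n => x i.castSucc) : Fin (n+1) → Bool) i = true
      then 2 ^ (n + 1 - 1 - i.val) else 0)
  rw [h]
  have h0 : (Fin.cons false (fun i : Fin n => x i.castSucc) : Fin (n+1) → Bool) 0 = false :=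
    Fin.cons_zero _ _
  rw [h0]
  simp only [Bool.false_eq_true, if_false, zero_add]
  apply Fintype.sum_congr
  intro i
  rw [Fin.cons_succ, Fin.val_succ]
  congr 2
  omega

lemma bval_shiftR {n : ℕ} (x : Fin (n+1) → Bool) :
    bval x = 2 * bval (shiftR x) + (if x (Fin.last n) then 1 else 0) := by
  rw [bval_shiftR_eq]
  unfold bval
  rw [Fin.sum_univ_castSucc]
  simp only [Fin.val_last, Fin.coe_castSucc]
  rw [Finset.mul_sum]
  congr 1
  · apply Fintype.sum_congr
    intro i
    rw [mul_ite, mul_zero, ← pow_succ']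
    congr 2
    omega
  · simp

lemma zero_of_bval_lt {n : ℕ} (y : Fin (n+1) → Bool) (h : bval y < 2 ^ n) : y 0 = false := by
  by_contra hy
  simp only [Bool.not_eq_false] at hy
  have hle : (if y 0 then 2 ^ (n + 1 - 1 - (0 : Fin (n+1)).val) else 0) ≤ bval y :=
    Finset.single_le_sum (f := fun i : Fin (n+1) => if y i then 2 ^ (n + 1 - 1 - i.val) else 0)
      (fun i _ => by positivity) (Finset.mem_univ 0)
  rw [hy] at hle
  simp at hle
  omega

lemma shiftL_shiftR {n : ℕ} (x : Fin (n+1) → Bool) :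
    shiftL (shiftR x) (x (Fin.last n)) = x := by
  funext i
  refine Fin.lastCases ?_ (fun j => ?_) i
  · simp [shiftL, shiftR]
  · simp [shiftL, shiftR, Fin.snoc_castSucc]

lemma shiftR_shiftL {n : ℕ} (y : Fin (n+1) → Bool) (hy : y 0 = false) (b : Bool) :
    shiftR (shiftL y b) = y := by
  funext i
  refine Fin.cases ?_ (fun j => ?_) i
  · simp [shiftR, hy]
  · simp [shiftL, shiftR, Fin.snoc_castSucc]

lemma shiftL_last {n : ℕ} (y : Fin (n+1) → Bool) (b : Bool) :
    shiftL y b (Fin.last n) = b := by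
  simp [shiftL]

lemma shiftR_succ {n : ℕ} (x : Fin (n+1) → Bool) (i : Fin n) :
    shiftR x i.succ = x i.castSucc := by
  simp [shiftR]

lemma shiftL_castSucc {n : ℕ} (y : Fin (n+1) → Bool) (b : Bool) (i : Fin n) :
    shiftL y b i.castSucc = y i.succ := by
  simp [shiftL]

/-! ### The binary-value equivalence and cardinality of initial segments -/

noncomputable def binEquiv (n : ℕ) : (Fin n → Bool) ≃ Fin (2 ^ n) :=
  ((Equiv.arrowCongr (Fin.revPerm (n := n)) (Equiv.refl Bool)).trans
    (Equiv.piCongrRight fun _ => finTwoEquiv.symm)).trans finFunctionFinEquiv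

lemma coe_binEquiv {n : ℕ} (x : Fin n → Bool) : ((binEquiv n x : Fin (2 ^ n)) : ℕ) = bval x := by
  unfold binEquiv bval
  rw [Equiv.trans_apply, finFunctionFinEquiv_apply_val]
  rw [← Equiv.sum_comp (Fin.revPerm (n := n))]
  apply Fintype.sum_congr
  intro i
  simp only [Equiv.trans_apply, Equiv.arrowCongr_apply, Equiv.piCongrRight_apply,
    Equiv.refl_apply, Function.comp_apply, Fin.revPerm_apply, Fin.rev_rev]
  have hval : (i.rev : ℕ) = n - 1 - i.val := by
    have := Fin.val_rev i
    omega
  rw [hval]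
  cases hx : x i <;> simp [hx, finTwoEquiv]

lemma card_initSeg {n a : ℕ} (ha : a ≤ 2 ^ n) : (initSeg n a).card = a := by
  classical
  have h1 : (initSeg n a).card
      = ((Finset.univ : Finset (Fin (2 ^ n))).filter (fun k : Fin (2 ^ n) => k.val < a)).card := by
    refine Finset.card_bij (fun x _ => binEquiv n x) ?_ ?_ ?_
    · intro x hx
      simp only [initSeg, Finset.mem_filter, Finset.mem_univ, true_and] at hx ⊢
      rw [coe_binEquiv]; exact hx
    · intro x₁ _ x₂ _ h
      exact (binEquiv n).injective h
    · intro k hk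
      refine ⟨(binEquiv n).symm k, ?_, by simp⟩
      simp only [initSeg, Finset.mem_filter, Finset.mem_univ, true_and] at hk ⊢
      rw [← coe_binEquiv ((binEquiv n).symm k), Equiv.apply_symm_apply]
      exact hk
  rw [h1]
  rw [show a = (Finset.range a).card from (Finset.card_range a).symm]
  refine Finset.card_bij (fun k _ => k.val) ?_ ?_ ?_
  · intro k hk; simp only [Finset.mem_filter] at hk; simpa using hk.2
  · intro k₁ _ k₂ _ h; exact Fin.val_injective h
  · intro m hm
    simp only [Finset.mem_range] at hm
    exact ⟨⟨m, lt_of_lt_of_le hm ha⟩, by simpa using hm, rfl⟩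

theorem stmt_12 (n a : ℕ) (ha : a ≤ 2 ^ n) :
    (∀ j : Fin (n + 1), (hj : j.val < n) →
      mCount (initSeg (n + 1) (2 * a)) j =
        2 * mCount (initSeg (n + 1) a) ⟨j.val + 1, by omega⟩) ∧
    mCount (initSeg (n + 1) (2 * a)) ⟨n, by omega⟩ = a := by
  classical
  have hmem : ∀ x : Fin (n+1) → Bool, x ∈ initSeg (n+1) a ↔ bval x < a := by
    intro x; simp [initSeg]
  have hmem2 : ∀ x : Fin (n+1) → Bool, x ∈ initSeg (n+1) (2*a) ↔ bval x < 2*a := by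
    intro x; simp [initSeg]
  have hzero : ∀ y : Fin (n+1) → Bool, bval y < a → y 0 = false := fun y hy =>
    zero_of_bval_lt y (lt_of_lt_of_le hy ha)
  constructor
  · -- part 1
    intro j hj
    set j' : Fin n := ⟨j.val, hj⟩ with hj'
    have hjc : j'.castSucc = j := by ext; rfl
    have hjs : (⟨j.val + 1, by omega⟩ : Fin (n+1)) = j'.succ := by ext; rfl
    unfold mCount
    have key : ((initSeg (n + 1) (2 * a)).filter (fun x => x j = true)).card =
        (((initSeg (n + 1) a).filter (fun x => x (⟨j.val + 1, by omega⟩ : Fin (n+1)) = true)) ×ˢ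
          (Finset.univ : Finset Bool)).card := by
      refine Finset.card_bij' (fun x _ => (shiftR x, x (Fin.last n)))
        (fun p _ => shiftL p.1 p.2) ?_ ?_ ?_ ?_
      · intro x hx
        simp only [Finset.mem_filter, hmem2] at hx
        obtain ⟨hxv, hxj⟩ := hx
        have hb := bval_shiftR x
        simp only [Finset.mem_product, Finset.mem_filter, hmem, Finset.mem_univ, and_true]
        constructor
        · split at hb <;> omega
        · rw [hjs, shiftR_succ, hjc]; exact hxj
      · rintro ⟨y, b⟩ hp
        simp only [Finset.mem_product, Finset.mem_filter, hmem] at hp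
        obtain ⟨⟨hpv, hpj⟩, -⟩ := hp
        simp only [Finset.mem_filter, hmem2]
        have h0 : y 0 = false := hzero _ hpv
        have hb := bval_shiftR (shiftL y b)
        rw [shiftR_shiftL y h0 b] at hb
        constructor
        · split at hb <;> omega
        · rw [← hjc, shiftL_castSucc, ← hjs]; exact hpj
      · intro x hx
        simp only [Finset.mem_filter] at hx
        have h := shiftL_shiftR x
        exact h
      · rintro ⟨y, b⟩ hp
        simp only [Finset.mem_product, Finset.mem_filter, hmem] at hp
        obtain ⟨⟨hpv, -⟩, -⟩ := hp
        have h0 : y 0 = false := hzero _ hpv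
        simp only
        rw [shiftR_shiftL y h0 b, shiftL_last]
    rw [key, Finset.card_product, Finset.card_univ, Fintype.card_bool, Nat.mul_comm]
  · -- part 2
    unfold mCount
    have hlast : (⟨n, by omega⟩ : Fin (n+1)) = Fin.last n := rfl
    have key : ((initSeg (n + 1) (2 * a)).filter
        (fun x => x (⟨n, by omega⟩ : Fin (n+1)) = true)).card = (initSeg (n + 1) a).card := by
      refine Finset.card_bij' (fun x _ => shiftR x) (fun y _ => shiftL y true) ?_ ?_ ?_ ?_
      · intro x hx
        simp only [Finset.mem_filter, hmem2, hlast] at hx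
        obtain ⟨hxv, hxl⟩ := hx
        have hb := bval_shiftR x
        rw [hxl] at hb
        norm_num at hb
        simp only [hmem]
        omega
      · intro y hy
        simp only [hmem] at hy
        have h0 : y 0 = false := hzero _ hy
        have hb := bval_shiftR (shiftL y true)
        rw [shiftR_shiftL y h0 true, shiftL_last] at hb
        norm_num at hb
        simp only [Finset.mem_filter, hmem2, hlast]
        exact ⟨by omega, shiftL_last y true⟩
      · intro x hx
        simp only [Finset.mem_filter, hlast] at hx
        have h := shiftL_shiftR x
        rw [hx.2] at h
        exact h
      · intro y hy
        simp only [hmem] at hy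
        exact shiftR_shiftL y (hzero _ hy) true
    rw [key]
    have hle : a ≤ 2 ^ (n+1) :=
      le_trans ha (Nat.pow_le_pow_right (by norm_num) (Nat.le_succ n))
    exact card_initSeg hle
end
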